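/- The integral (1/(2π)) ∫_{-2}^{2} (x/(2 − x)) √(1 − (x/2)²) dx equals 1/2. -/

import Mathlib

open MeasureTheory Set

noncomputable def Fant (x : ℝ) : ℝ :=
  Real.arcsin (x/2) - Real.sqrt (4 - x^2) - x * Real.sqrt (4 - x^2) / 4

lemma sqrt_half (x : ℝ) (hx : x ∈ Ioo (-2:ℝ) 2) :
    Real.sqrt (1 - (x/2)^2) = Real.sqrt (4 - x^2) / 2 := by
  rw [show (1 - (x/2)^2) = (4 - x^2)/4 by ring,
    Real.sqrt_div (by nlinarith [hx.1, hx.2] : (0:ℝ) ≤ 4 - x^2)]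
  rw [show (4:ℝ) = 2^2 by norm_num, Real.sqrt_sq (by norm_num : (0:ℝ) ≤ 2)]

lemma hasDeriv_Fant (x : ℝ) (hx : x ∈ Ioo (-2:ℝ) 2) :
    HasDerivAt Fant (x/(2 - x) * Real.sqrt (1 - (x/2)^2)) x := by
  obtain ⟨h1, h2⟩ := hx
  set s := Real.sqrt (4 - x^2) with hs_def
  have hs2 : s^2 = 4 - x^2 := Real.sq_sqrt (by nlinarith)
  have hs0 : 0 < s := Real.sqrt_pos.2 (by nlinarith)
  have hinner : HasDerivAt (fun y : ℝ => 4 - y^2) (-(2*x)) x := by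
    simpa using (hasDerivAt_pow 2 x).const_sub 4
  have hsqrt : HasDerivAt (fun y : ℝ => Real.sqrt (4 - y^2)) (1/(2*s) * (-(2*x))) x :=
    (Real.hasDerivAt_sqrt (by nlinarith : 4 - x^2 ≠ 0)).comp x hinner
  have harcsin : HasDerivAt (fun y : ℝ => Real.arcsin (y/2))
      ((1 / Real.sqrt (1 - (x/2)^2)) * (1/2)) x :=
    (Real.hasDerivAt_arcsin (by intro h; rw [div_eq_iff (by norm_num)] at h; linarith)
      (by intro h; rw [div_eq_iff (by norm_num)] at h; linarith)).comp x
      ((hasDerivAt_id x).div_const 2)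
  have hprod : HasDerivAt (fun y : ℝ => y * Real.sqrt (4 - y^2))
      (1 * s + x * (1/(2*s) * (-(2*x)))) x := (hasDerivAt_id x).mul hsqrt
  have hF : HasDerivAt Fant
      ((1 / Real.sqrt (1 - (x/2)^2)) * (1/2) - 1/(2*s) * (-(2*x))
        - (1 * s + x * (1/(2*s) * (-(2*x)))) / 4) x :=
    ((harcsin.sub hsqrt).sub (hprod.div_const 4))
  convert hF using 1
  rw [sqrt_half x ⟨h1, h2⟩, ← hs_def]
  have h2x : (2:ℝ) - x ≠ 0 := by linarith
  field_simp
  linear_combination (2*x+4) * hs2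

theorem stmt_6 :
    (1/(2*Real.pi)) * ∫ x in (-2:ℝ)..2, (x/(2 - x)) * Real.sqrt (1 - (x/2)^2) = 1/2 := by
  have hbound : IntegrableOn (fun x : ℝ => 4 * (Real.sqrt (4 - x^2))⁻¹) (Ioc (-2:ℝ) 2) := by
    apply Integrable.const_mul
    apply intervalIntegral.integrableOn_deriv_of_nonneg
      (g := fun x : ℝ => Real.arcsin (x/2))
    · exact (Real.continuous_arcsin.comp (continuous_id.div_const 2)).continuousOn
    · intro x hx
      have harcsin : HasDerivAt (fun y : ℝ => Real.arcsin (y/2))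
          ((1 / Real.sqrt (1 - (x/2)^2)) * (1/2)) x :=
        (Real.hasDerivAt_arcsin (by intro h; rw [div_eq_iff (by norm_num)] at h; linarith [hx.1])
          (by intro h; rw [div_eq_iff (by norm_num)] at h; linarith [hx.2])).comp x
          ((hasDerivAt_id x).div_const 2)
      convert harcsin using 1
      rw [sqrt_half x hx]
      have hs0 : 0 < Real.sqrt (4 - x^2) :=
        Real.sqrt_pos.2 (by nlinarith [hx.1, hx.2])
      field_simp
    · intro x hx
      positivity
  have hmeas : Measurable fun x : ℝ => x/(2 - x) * Real.sqrt (1 - (x/2)^2) := by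
    exact (measurable_id.div (measurable_const.sub measurable_id)).mul
      (Real.continuous_sqrt.measurable.comp
        (measurable_const.sub ((measurable_id.div_const 2).pow_const 2)))
  have hint : IntervalIntegrable (fun x : ℝ => x/(2 - x) * Real.sqrt (1 - (x/2)^2))
      volume (-2) 2 := by
    rw [intervalIntegrable_iff_integrableOn_Ioc_of_le (by norm_num)]
    apply hbound.mono' hmeas.aestronglyMeasurable.restrict
    filter_upwards [ae_restrict_mem measurableSet_Ioc] with x hx
    rcases eq_or_lt_of_le hx.2 with h | h
    · rw [← h]
      norm_num
    · have hx' : x ∈ Ioo (-2:ℝ) 2 := ⟨hx.1, h⟩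
      rw [sqrt_half x hx']
      set s := Real.sqrt (4 - x^2) with hs_def
      have hs2 : s^2 = 4 - x^2 := Real.sq_sqrt (by nlinarith [hx'.1, hx'.2])
      have hs0 : 0 < s := Real.sqrt_pos.2 (by nlinarith [hx'.1, hx'.2])
      have h2x : (0:ℝ) < 2 - x := by linarith
      have habs : |x| ≤ 2 := abs_le.2 ⟨le_of_lt hx'.1, le_of_lt hx'.2⟩
      rw [Real.norm_eq_abs, abs_mul, abs_div, abs_of_pos h2x,
        abs_of_nonneg (by positivity : (0:ℝ) ≤ s/2)]
      rw [div_mul_eq_mul_div, div_le_iff₀ h2x, mul_comm (4:ℝ) s⁻¹, inv_mul_eq_div,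
        div_mul_eq_mul_div, le_div_iff₀ hs0]
      nlinarith [sq_nonneg (|x| - 2), abs_nonneg x, neg_abs_le x, habs, hs2, sq_abs x]
  have key : (∫ x in (-2:ℝ)..2, x/(2 - x) * Real.sqrt (1 - (x/2)^2)) = Fant 2 - Fant (-2) := by
    apply intervalIntegral.integral_eq_sub_of_hasDeriv_right_of_le (by norm_num)
    · unfold Fant
      apply ContinuousOn.sub
      apply ContinuousOn.sub
      · exact (Real.continuous_arcsin.comp (continuous_id.div_const 2)).continuousOn
      · exact (Real.continuous_sqrt.comp (by continuity)).continuousOn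
      · exact ((continuous_id.mul (Real.continuous_sqrt.comp (by continuity))).div_const 4).continuousOn
    · intro x hx
      exact (hasDeriv_Fant x hx).hasDerivWithinAt
    · exact hint
  rw [key]
  unfold Fant
  have h0 : Real.sqrt (4 - (2:ℝ)^2) = 0 := by norm_num
  have h0' : Real.sqrt (4 - (-2:ℝ)^2) = 0 := by norm_num
  rw [h0, h0']
  norm_num [Real.arcsin_one, Real.arcsin_neg]
  rw [mul_comm, ← mul_assoc, mul_inv_cancel₀ Real.pi_ne_zero, one_mul]
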